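/- Let F = F_{q^2} with involution x ↦ x^q. For every positive integer d there exists a matrix B ∈ M_{d×(d+1)}(F) such that both B·B* and B*·B are nilpotent with a single Jordan block, i.e., B·B* is nilpotent of rank d−1 with (BB*)^{d-1} ≠ 0, and B*·B is nilpotent of rank d with (B*B)^d ≠ 0. -/

import Mathlib

open Matrix


namespace Stmt8Aux

variable {F : Type*} [Field F]

def bstar (φ : F →+* F) {a b : ℕ} (X : Matrix (Fin a) (Fin b) F) :
    Matrix (Fin b) (Fin a) F := (X.map φ)ᵀ

lemma bstar_apply (φ : F →+* F) {a b : ℕ} (X : Matrix (Fin a) (Fin b) F) (i j) :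
    bstar φ X i j = φ (X j i) := rfl

lemma bstar_mul (φ : F →+* F) {a b c : ℕ} (X : Matrix (Fin a) (Fin b) F)
    (Y : Matrix (Fin b) (Fin c) F) : bstar φ (X * Y) = bstar φ Y * bstar φ X := by
  unfold bstar
  rw [Matrix.map_mul, Matrix.transpose_mul]

lemma bstar_one (φ : F →+* F) {a : ℕ} : bstar φ (1 : Matrix (Fin a) (Fin a) F) = 1 := by
  unfold bstar
  rw [Matrix.map_one _ (map_zero φ) (map_one φ), Matrix.transpose_one]

lemma bstar_add (φ : F →+* F) {a b : ℕ} (X Y : Matrix (Fin a) (Fin b) F) :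
    bstar φ (X + Y) = bstar φ X + bstar φ Y := by
  ext i j
  simp [bstar_apply, Matrix.add_apply, map_add]

def Wm (m : ℕ) : Matrix (Fin m) (Fin m) F :=
  Matrix.of fun i j => if j = Fin.rev i then 1 else 0

def Dm (m : ℕ) (x y z : F) : Matrix (Fin m) (Fin m) F :=
  Matrix.diagonal (fun i => if 2 * (i : ℕ) + 1 < m then x
    else if 2 * (i : ℕ) + 1 = m then y else z)

lemma Wm_mul_apply {m r : ℕ} (A : Matrix (Fin m) (Fin r) F) (i : Fin m) (j : Fin r) :
    ((Wm m : Matrix (Fin m) (Fin m) F) * A) i j = A i.rev j := by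
  rw [Matrix.mul_apply, Finset.sum_eq_single i.rev]
  · simp [Wm]
  · intro b _ hb
    simp [Wm, hb]
  · simp

lemma mul_Wm_apply {m r : ℕ} (A : Matrix (Fin r) (Fin m) F) (i : Fin r) (j : Fin m) :
    (A * (Wm m : Matrix (Fin m) (Fin m) F)) i j = A i j.rev := by
  rw [Matrix.mul_apply, Finset.sum_eq_single j.rev]
  · simp [Wm, Fin.rev_rev]
  · intro b _ hb
    have : j ≠ b.rev := by
      intro h; exact hb (by rw [h, Fin.rev_rev])
    simp [Wm, this]
  · simp

lemma Wm_mul_Wm {m : ℕ} : (Wm m : Matrix (Fin m) (Fin m) F) * Wm m = 1 := by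
  ext i j
  rw [Wm_mul_apply]
  simp only [Wm, Matrix.of_apply, Fin.rev_rev, Matrix.one_apply]
  by_cases h : i = j <;> simp [h, eq_comm]

lemma Dm_mul_Dm {m : ℕ} (x y z x' y' z' : F) :
    Dm m x y z * Dm m x' y' z' = Dm m (x * x') (y * y') (z * z') := by
  unfold Dm
  rw [Matrix.diagonal_mul_diagonal]
  apply congrArg Matrix.diagonal
  funext i
  split_ifs <;> rfl

lemma Dm_add {m : ℕ} (x y z x' y' z' : F) :
    Dm m x y z + Dm m x' y' z' = Dm m (x + x') (y + y') (z + z') := by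
  unfold Dm
  rw [Matrix.diagonal_add]
  apply congrArg Matrix.diagonal
  funext i
  split_ifs <;> rfl

lemma Dm_one {m : ℕ} : (Dm m 1 1 1 : Matrix (Fin m) (Fin m) F) = 1 := by
  unfold Dm
  rw [← Matrix.diagonal_one]
  apply congrArg Matrix.diagonal
  funext i
  split_ifs <;> rfl

lemma Dm_zero {m : ℕ} : (Dm m 0 0 0 : Matrix (Fin m) (Fin m) F) = 0 := by
  unfold Dm
  rw [← Matrix.diagonal_zero]
  apply congrArg Matrix.diagonal
  funext i
  split_ifs <;> rfl

lemma Wm_mul_Dm {m : ℕ} (x y z : F) :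
    (Wm m : Matrix (Fin m) (Fin m) F) * Dm m x y z = Dm m z y x * Wm m := by
  ext i j
  rw [Wm_mul_apply, mul_Wm_apply]
  unfold Dm
  have hi : (i : ℕ) < m := i.isLt
  have hj : (j : ℕ) < m := j.isLt
  have hrev : ((i.rev : Fin m) : ℕ) = m - (i + 1) := Fin.val_rev i
  have hrevj : ((j.rev : Fin m) : ℕ) = m - (j + 1) := Fin.val_rev j
  rcases eq_or_ne (i.rev) j with h | h
  · have h' : i = j.rev := by rw [← h, Fin.rev_rev]
    subst h
    rw [Matrix.diagonal_apply_eq, ← h', Matrix.diagonal_apply_eq]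
    split_ifs <;> first | rfl | (exfalso; omega)
  · rw [Matrix.diagonal_apply_ne _ h]
    have h' : i ≠ j.rev := by
      intro hh; exact h (by rw [hh, Fin.rev_rev])
    rw [Matrix.diagonal_apply_ne _ h']

lemma Dm_mul_Wm {m : ℕ} (x y z : F) :
    Dm m x y z * (Wm m : Matrix (Fin m) (Fin m) F) = Wm m * Dm m z y x := by
  rw [Wm_mul_Dm]

lemma Wm_mul_Dm_mid {m : ℕ} (y : F) :
    (Wm m : Matrix (Fin m) (Fin m) F) * Dm m 0 y 0 = Dm m 0 y 0 := by
  ext i j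
  rw [Wm_mul_apply]
  unfold Dm
  have hi : (i : ℕ) < m := i.isLt
  have hj : (j : ℕ) < m := j.isLt
  have hrev : ((i.rev : Fin m) : ℕ) = m - (i + 1) := Fin.val_rev i
  by_cases hm : 2 * (i : ℕ) + 1 = m
  · have hrevi : i.rev = i := by
      apply Fin.ext; omega
    rw [hrevi]
  · rcases eq_or_ne i.rev j with h | h
    · subst h
      rw [Matrix.diagonal_apply_eq]
      rcases eq_or_ne i (i.rev) with h2 | h2
      · rw [← h2, Matrix.diagonal_apply_eq]
      · rw [Matrix.diagonal_apply_ne _ h2]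
        split_ifs <;> first | rfl | omega
    · rw [Matrix.diagonal_apply_ne _ h]
      rcases eq_or_ne i j with h2 | h2
      · subst h2
        rw [Matrix.diagonal_apply_eq]
        split_ifs <;> first | rfl | omega
      · rw [Matrix.diagonal_apply_ne _ h2]

end Stmt8Aux

namespace Stmt8Aux
variable {F : Type*} [Field F]

/-- matrices of the form `D + W * D'` -/
def TD (m : ℕ) (a₁ a₂ a₃ c₁ c₂ c₃ : F) : Matrix (Fin m) (Fin m) F :=
  Dm m a₁ a₂ a₃ + Wm m * Dm m c₁ c₂ c₃

lemma TD_mul {m : ℕ} (a₁ a₂ a₃ c₁ c₂ c₃ e₁ e₂ e₃ f₁ f₂ f₃ : F) :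
    TD m a₁ a₂ a₃ c₁ c₂ c₃ * TD m e₁ e₂ e₃ f₁ f₂ f₃ =
      TD m (a₁ * e₁ + c₃ * f₁) (a₂ * e₂ + c₂ * f₂) (a₃ * e₃ + c₁ * f₃)
        (a₃ * f₁ + c₁ * e₁) (a₂ * f₂ + c₂ * e₂) (a₁ * f₃ + c₃ * e₃) := by
  unfold TD
  rw [add_mul, mul_add, mul_add]
  have h2 : Dm m a₁ a₂ a₃ * (Wm m * Dm m f₁ f₂ f₃)
      = Wm m * Dm m (a₃ * f₁) (a₂ * f₂) (a₁ * f₃) := by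
    rw [← Matrix.mul_assoc, Dm_mul_Wm, Matrix.mul_assoc, Dm_mul_Dm]
  have h3 : Wm m * Dm m c₁ c₂ c₃ * Dm m e₁ e₂ e₃
      = Wm m * Dm m (c₁ * e₁) (c₂ * e₂) (c₃ * e₃) := by
    rw [Matrix.mul_assoc, Dm_mul_Dm]
  have h4 : Wm m * Dm m c₁ c₂ c₃ * (Wm m * Dm m f₁ f₂ f₃)
      = Dm m (c₃ * f₁) (c₂ * f₂) (c₁ * f₃) := by
    rw [Matrix.mul_assoc, ← Matrix.mul_assoc (Dm m c₁ c₂ c₃), Dm_mul_Wm,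
      ← Matrix.mul_assoc, ← Matrix.mul_assoc, Wm_mul_Wm, Matrix.one_mul, Dm_mul_Dm]
  rw [Dm_mul_Dm, h2, h3, h4]
  have hre : ∀ A B C D : Matrix (Fin m) (Fin m) F, A + B + (C + D) = (A + D) + (B + C) := by
    intros; abel
  rw [hre, Dm_add, ← Matrix.mul_add, Dm_add]

lemma TD_one {m : ℕ} : (TD m 1 1 1 0 0 0 : Matrix (Fin m) (Fin m) F) = 1 := by
  unfold TD
  rw [Dm_one, Dm_zero, Matrix.mul_zero, add_zero]

lemma Wm_eq_TD {m : ℕ} : (Wm m : Matrix (Fin m) (Fin m) F) = TD m 0 1 0 1 0 1 := by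
  unfold TD
  calc (Wm m : Matrix (Fin m) (Fin m) F) = Wm m * Dm m 1 1 1 := by rw [Dm_one, Matrix.mul_one]
    _ = Wm m * (Dm m 1 0 1 + Dm m 0 1 0) := by rw [Dm_add]; norm_num
    _ = Wm m * Dm m 1 0 1 + Wm m * Dm m 0 1 0 := by rw [Matrix.mul_add]
    _ = Dm m 0 1 0 + Wm m * Dm m 1 0 1 := by rw [Wm_mul_Dm_mid, add_comm]

lemma bstar_Wm (φ : F →+* F) {m : ℕ} : bstar φ (Wm m : Matrix (Fin m) (Fin m) F) = Wm m := by
  ext i j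
  rw [bstar_apply]
  simp only [Wm, Matrix.of_apply]
  rw [apply_ite φ, _root_.map_one, _root_.map_zero]
  have : i = j.rev ↔ j = i.rev := by
    rw [Fin.ext_iff, Fin.ext_iff, Fin.val_rev, Fin.val_rev]
    have := i.isLt; have := j.isLt
    omega
  simp only [this]

lemma bstar_Dm (φ : F →+* F) {m : ℕ} (x y z : F) :
    bstar φ (Dm m x y z : Matrix (Fin m) (Fin m) F) = Dm m (φ x) (φ y) (φ z) := by
  unfold bstar Dm
  rw [Matrix.diagonal_map (map_zero φ), Matrix.diagonal_transpose]
  apply congrArg Matrix.diagonal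
  funext i
  rw [apply_ite φ, apply_ite φ]

lemma bstar_TD (φ : F →+* F) {m : ℕ} (a₁ a₂ a₃ c₁ c₂ c₃ : F) :
    bstar φ (TD m a₁ a₂ a₃ c₁ c₂ c₃)
      = TD m (φ a₁) (φ a₂) (φ a₃) (φ c₃) (φ c₂) (φ c₁) := by
  unfold TD
  rw [bstar_add, bstar_Dm, bstar_mul, bstar_Dm, bstar_Wm, Dm_mul_Wm]

lemma ite_mul_ite (P Q : Prop) [Decidable P] [Decidable Q] :
    (if P then (1:F) else 0) * (if Q then 1 else 0) = if P ∧ Q then 1 else 0 := by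
  split_ifs <;> first | tauto | norm_num

/-- the shift (Jordan block) matrix -/
def Jm (m : ℕ) : Matrix (Fin m) (Fin m) F :=
  Matrix.of fun i j => if (j : ℕ) = (i : ℕ) + 1 then 1 else 0

/-- the inclusion `[0 | 1] : d × (d+1)` -/
def Em (d : ℕ) : Matrix (Fin d) (Fin (d + 1)) F :=
  Matrix.of fun i j => if (j : ℕ) = (i : ℕ) + 1 then 1 else 0

lemma Jm_pow (m k : ℕ) : (Jm m : Matrix (Fin m) (Fin m) F) ^ k
    = Matrix.of (fun (i j : Fin m) => if (j : ℕ) = (i : ℕ) + k then 1 else 0) := by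
  induction k with
  | zero =>
    ext i j
    rw [pow_zero, Matrix.one_apply]
    simp only [Matrix.of_apply, Nat.add_zero]
    by_cases h : (i : ℕ) = (j : ℕ)
    · have hij : i = j := Fin.ext h
      simp [hij]
    · have h1 : i ≠ j := fun hh => h (by rw [hh])
      have h2 : ¬((j : ℕ) = (i : ℕ)) := fun hh => h hh.symm
      simp [h1, h2]
  | succ k ih =>
    ext i j
    rw [pow_succ, ih, Matrix.mul_apply]
    simp only [Matrix.of_apply, Jm]
    by_cases hc : (j : ℕ) = (i : ℕ) + (k + 1)
    · have hik : (i : ℕ) + k < m := by have := j.isLt; omega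
      have hv : ((⟨(i:ℕ)+k, hik⟩ : Fin m) : ℕ) = (i:ℕ)+k := rfl
      rw [if_pos hc, Finset.sum_eq_single (⟨(i:ℕ)+k, hik⟩ : Fin m)]
      · rw [if_pos (by omega), if_pos (by omega), one_mul]
      · intro b _ hb
        have : ¬ ((b:ℕ) = (i:ℕ)+k) := fun hh => hb (Fin.ext hh)
        rw [if_neg this, zero_mul]
      · intro h; exact absurd (Finset.mem_univ _) h
    · rw [if_neg hc, Finset.sum_eq_zero]
      intro b _
      by_cases h1 : (b:ℕ) = (i:ℕ)+k
      · rw [if_neg (by omega : ¬ ((j:ℕ) = (b:ℕ)+1)), mul_zero]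
      · rw [if_neg h1, zero_mul]

lemma Jm_pow_self (m : ℕ) : (Jm m : Matrix (Fin m) (Fin m) F) ^ m = 0 := by
  rw [Jm_pow]
  ext i j
  have := j.isLt
  have : ¬ ((j : ℕ) = (i : ℕ) + m) := by omega
  simp [this]

lemma Jm_pow_pred (m : ℕ) (hm : 0 < m) :
    (Jm m : Matrix (Fin m) (Fin m) F) ^ (m - 1) ≠ 0 := by
  rw [Jm_pow]
  intro h
  have h0 : (0 : ℕ) < m := hm
  have hlt : m - 1 < m := by omega
  have := congrFun (congrFun h ⟨0, h0⟩) ⟨m - 1, hlt⟩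
  simp at this

lemma bstar_Em (φ : F →+* F) {d : ℕ} (i : Fin (d+1)) (j : Fin d) :
    bstar φ (Em d : Matrix (Fin d) (Fin (d+1)) F) i j
      = if (i : ℕ) = (j : ℕ) + 1 then 1 else 0 := by
  rw [bstar_apply]
  simp only [Em, Matrix.of_apply]
  rw [apply_ite φ, _root_.map_one, _root_.map_zero]

/-- the key rectangular identity : `E* W_d E = W_{d+1} J_{d+1}` -/
lemma Em_key (φ : F →+* F) {d : ℕ} :
    (bstar φ (Em d : Matrix (Fin d) (Fin (d+1)) F) * (Wm d : Matrix (Fin d) (Fin d) F) : Matrix (Fin (d+1)) (Fin d) F) * (Em d : Matrix (Fin d) (Fin (d+1)) F)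
      = (Wm (d+1) : Matrix (Fin (d+1)) (Fin (d+1)) F) * Jm (d+1) := by
  ext j k
  have hj : (j : ℕ) < d + 1 := j.isLt
  have hk : (k : ℕ) < d + 1 := k.isLt
  have hrevj : ((j.rev : Fin (d+1)) : ℕ) = d + 1 - ((j : ℕ) + 1) := Fin.val_rev j
  rw [Wm_mul_apply]
  simp only [Jm, Matrix.of_apply]
  rw [Matrix.mul_apply]
  have hterm : ∀ b : Fin d,
      (bstar φ (Em d : Matrix (Fin d) (Fin (d+1)) F) * (Wm d : Matrix (Fin d) (Fin d) F) : Matrix (Fin (d+1)) (Fin d) F) j b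
        * (Em d : Matrix (Fin d) (Fin (d+1)) F) b k
      = (if ((j : ℕ) = (d - 1 - (b:ℕ)) + 1 ∧ (k : ℕ) = (b : ℕ) + 1) then 1 else 0) := by
    intro b
    rw [mul_Wm_apply, bstar_Em]
    simp only [Em, Matrix.of_apply]
    rw [ite_mul_ite]
    have hrevb : ((b.rev : Fin d) : ℕ) = d - ((b : ℕ) + 1) := Fin.val_rev b
    have hb : (b : ℕ) < d := b.isLt
    apply if_congr _ rfl rfl
    constructor
    · rintro ⟨u1, u2⟩; exact ⟨by omega, by omega⟩
    · rintro ⟨u1, u2⟩; exact ⟨by omega, by omega⟩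
  rw [Finset.sum_congr rfl (fun b _ => hterm b)]
  by_cases hc : 1 ≤ (j : ℕ) ∧ (j : ℕ) + (k : ℕ) = d + 1
  · have hb0 : d - (j : ℕ) < d := by omega
    have hv : ((⟨d - (j:ℕ), hb0⟩ : Fin d) : ℕ) = d - (j:ℕ) := rfl
    rw [if_pos (by omega : (k : ℕ) = ((j.rev : Fin (d+1)) : ℕ) + 1)]
    rw [Finset.sum_eq_single (⟨d - (j:ℕ), hb0⟩ : Fin d)]
    · rw [if_pos ⟨by omega, by omega⟩]
    · intro b _ hb
      have hbv : (b : ℕ) < d := b.isLt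
      rw [if_neg]
      rintro ⟨u1, u2⟩
      exact hb (Fin.ext (by omega))
    · intro h; exact absurd (Finset.mem_univ _) h
  · rw [if_neg (by omega : ¬ ((k : ℕ) = ((j.rev : Fin (d+1)) : ℕ) + 1))]
    apply Finset.sum_eq_zero
    intro b _
    have hbv : (b : ℕ) < d := b.isLt
    rw [if_neg]
    rintro ⟨u1, u2⟩
    exact hc ⟨by omega, by omega⟩

end Stmt8Aux

namespace Stmt8Aux
open Module
variable {F : Type*} [Field F]

/-- A nilpotent `m × m` matrix whose `(m-1)`-st power is nonzero has rank `m - 1`. -/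
lemma rank_of_nilpotent_pow_pred {m : ℕ} (hm : 0 < m) (N : Matrix (Fin m) (Fin m) F)
    (hnil : IsNilpotent N) (h1 : N ^ (m - 1) ≠ 0) : N.rank = m - 1 := by
  classical
  obtain ⟨K, hK⟩ := hnil
  have hcol : ∃ i j, (N ^ (m - 1)) i j ≠ 0 := by
    by_contra hno
    push_neg at hno
    exact h1 (by ext i j; exact hno i j)
  obtain ⟨i0, j0, hij⟩ := hcol
  set v : Fin m → F := Pi.single j0 1 with hv
  have hvstart : (N ^ (m - 1)).mulVec v ≠ 0 := by
    intro h
    have := congrFun h i0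
    rw [mulVec_single] at this
    simp only [mul_one, Pi.zero_apply] at this
    exact hij (by simpa only [Pi.smul_apply, MulOpposite.op_one, one_smul, Matrix.col,
      Matrix.transpose_apply] using this)
  have hKv : (N ^ K).mulVec v = 0 := by rw [hK, zero_mulVec]
  have hex : ∃ s, (N ^ s).mulVec v = 0 := ⟨K, hKv⟩
  set t := Nat.find hex with ht
  have ht0 : (N ^ t).mulVec v = 0 := Nat.find_spec hex
  have htmin : ∀ s, s < t → (N ^ s).mulVec v ≠ 0 := fun s hs => Nat.find_min hex hs
  have hup : ∀ s, t ≤ s → (N ^ s).mulVec v = 0 := by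
    intro s hs
    have hrepr : s = (s - t) + t := by omega
    rw [hrepr, pow_add, ← mulVec_mulVec, ht0, mulVec_zero]
  have hmt : m ≤ t := by
    have h' : ¬ (t ≤ m - 1) := fun hle => hvstart (hup _ hle)
    omega
  have htpos : 1 ≤ t := by omega
  -- the Krylov family
  set u : Fin m → (Fin m → F) := fun i => (N ^ (t - m + (i : ℕ))).mulVec v with hu
  have hulin : LinearIndependent F u := by
    rw [Fintype.linearIndependent_iff]
    intro g hg
    have main : ∀ k : ℕ, ∀ j : Fin m, (j : ℕ) = k → g j = 0 := by
      intro k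
      induction k using Nat.strong_induction_on with
      | _ k ih =>
        intro j hjk
        have hjm : (j : ℕ) < m := j.isLt
        have happ : ∑ i : Fin m, g i • (N ^ ((m - 1 - (j:ℕ)) + (t - m + (i:ℕ)))).mulVec v
            = 0 := by
          have h0 : (N ^ (m - 1 - (j:ℕ))).mulVecLin (∑ i : Fin m, g i • u i) = 0 := by
            rw [hg, map_zero]
          rw [map_sum] at h0
          rw [← h0]
          apply Finset.sum_congr rfl
          intro i _
          rw [_root_.map_smul]
          congr 1
          rw [mulVecLin_apply]
          show N ^ (m - 1 - (j:ℕ) + (t - m + (i:ℕ))) *ᵥ v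
            = N ^ (m - 1 - (j:ℕ)) *ᵥ (N ^ (t - m + (i:ℕ)) *ᵥ v)
          rw [mulVec_mulVec, ← pow_add]
        rw [Finset.sum_eq_single j] at happ
        · have hexp : (m - 1 - (j:ℕ)) + (t - m + (j:ℕ)) = t - 1 := by omega
          rw [hexp] at happ
          rcases smul_eq_zero.mp happ with h | h
          · exact h
          · exact absurd h (htmin _ (by omega))
        · intro b _ hbj
          rcases Nat.lt_or_ge (b : ℕ) (j : ℕ) with hlt | hge
          · rw [ih (b : ℕ) (by omega) b rfl, zero_smul]
          · have hbgt : (j : ℕ) < (b : ℕ) := by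
              rcases Nat.lt_or_ge (j : ℕ) (b : ℕ) with h' | h'
              · exact h'
              · exact absurd (Fin.ext (by omega) : b = j) hbj
            have hbm : (b : ℕ) < m := b.isLt
            rw [hup ((m - 1 - (j:ℕ)) + (t - m + (b:ℕ))) (by omega), smul_zero]
        · intro hmem
          exact absurd (Finset.mem_univ _) hmem
    intro i
    exact main (i : ℕ) i rfl
  -- decompose m = e + 1
  obtain ⟨e, rfl⟩ : ∃ e, m = e + 1 := ⟨m - 1, by omega⟩
  have hme : (e + 1) - 1 = e := by omega
  -- lower bound on the rank
  have hw_mem : ∀ i : Fin e, u i.succ ∈ LinearMap.range N.mulVecLin := by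
    intro i
    refine ⟨(N ^ (t - (e+1) + (i : ℕ))).mulVec v, ?_⟩
    rw [mulVecLin_apply, mulVec_mulVec, ← pow_succ']
    have : t - (e+1) + ((i.succ : Fin (e+1)) : ℕ) = (t - (e+1) + (i : ℕ)) + 1 := by
      rw [Fin.val_succ]; omega
    rw [hu]
    simp only
    rw [this]
  have hwlin : LinearIndependent F (fun i : Fin e => u i.succ) :=
    hulin.comp Fin.succ (Fin.succ_injective e)
  set R := LinearMap.range N.mulVecLin with hR
  set w' : Fin e → R := fun i => ⟨u i.succ, hw_mem i⟩ with hw'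
  have hw'lin : LinearIndependent F w' := by
    apply LinearIndependent.of_comp R.subtype
    exact hwlin
  have hlower : e ≤ finrank F R := by
    have := hw'lin.fintype_card_le_finrank
    simpa using this
  -- upper bound: kernel is nontrivial
  have hker : ∃ z : Fin (e+1) → F, z ≠ 0 ∧ N.mulVecLin z = 0 := by
    refine ⟨(N ^ (t - 1)).mulVec v, htmin _ (by omega), ?_⟩
    rw [mulVecLin_apply, mulVec_mulVec, ← pow_succ']
    have : t - 1 + 1 = t := by omega
    rw [this, ht0]
  obtain ⟨z, hz0, hzker⟩ := hker
  have hkdim : 1 ≤ finrank F (LinearMap.ker N.mulVecLin) := by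
    have hnt : Nontrivial (LinearMap.ker N.mulVecLin) := by
      refine ⟨⟨z, hzker⟩, 0, ?_⟩
      intro hcontra
      exact hz0 (by simpa using congrArg Subtype.val hcontra)
    have := Module.finrank_pos_iff (R := F) (M := LinearMap.ker N.mulVecLin) |>.mpr hnt
    omega
  have hsum : finrank F R + finrank F (LinearMap.ker N.mulVecLin) = e + 1 := by
    have := LinearMap.finrank_range_add_finrank_ker N.mulVecLin
    rwa [Module.finrank_fintype_fun_eq_card, Fintype.card_fin] at this
  have hrank : N.rank = finrank F R := rfl
  omega

end Stmt8Aux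

namespace Stmt8Aux
open Module
variable {F : Type*} [Field F]

lemma exists_T (φ : F →+* F) (b b' : F) (hb : φ b * b = -1) (hb' : φ b' * b' = -1)
    (hne : b ≠ b') (m : ℕ) :
    ∃ T T' : Matrix (Fin m) (Fin m) F,
      bstar φ T * T = Wm m ∧ T * T' = 1 ∧ T' * T = 1 := by
  have hb0 : b ≠ 0 := by
    intro h; rw [h, mul_zero] at hb; simp at hb
  have hb'0 : b' ≠ 0 := by
    intro h; rw [h, mul_zero] at hb'; simp at hb'
  have hs : b' - b ≠ 0 := sub_ne_zero.mpr (Ne.symm hne)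
  set s : F := b' - b with hsdef
  set l : F := -(b * s⁻¹) with hldef
  set gg : F := l * b' with hggdef
  set xx : F := b' * s⁻¹ with hxxdef
  set zz : F := -b⁻¹ with hzzdef
  set vv : F := -s⁻¹ with hvvdef
  have hφb : φ b = -b⁻¹ := by
    have h2 : φ b * b = -b⁻¹ * b := by rw [hb]; field_simp
    exact mul_right_cancel₀ hb0 h2
  have hφb' : φ b' = -b'⁻¹ := by
    have h2 : φ b' * b' = -b'⁻¹ * b' := by rw [hb']; field_simp
    exact mul_right_cancel₀ hb'0 h2
  have hφs : φ s = s * (b * b')⁻¹ := by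
    rw [hsdef, _root_.map_sub, hφb, hφb']
    field_simp
    ring
  have hφl : φ l = b' * s⁻¹ := by
    rw [hldef, _root_.map_neg, _root_.map_mul, map_inv₀, hφb, hφs]
    field_simp
  have hφgg : φ gg = -s⁻¹ := by
    rw [hggdef, _root_.map_mul, hφl, hφb']
    field_simp
  have hTT' : TD m 1 1 gg b 0 l * TD m xx 1 zz 1 0 vv = 1 := by
    rw [TD_mul]
    rw [show (1:F) * xx + l * 1 = 1 by
      rw [hxxdef, hldef]; field_simp; rw [hsdef]; ring]
    rw [show (1:F) * 1 + 0 * 0 = 1 by ring]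
    rw [show gg * zz + b * vv = 1 by
      rw [hggdef, hldef, hzzdef, hvvdef]; field_simp; rw [hsdef]; ring]
    rw [show gg * 1 + b * xx = 0 by
      rw [hggdef, hldef, hxxdef]; ring]
    rw [show (1:F) * 0 + 0 * 1 = 0 by ring]
    rw [show (1:F) * vv + l * zz = 0 by
      rw [hldef, hzzdef, hvvdef]; field_simp; ring]
    exact TD_one
  refine ⟨TD m 1 1 gg b 0 l, TD m xx 1 zz 1 0 vv, ?_, hTT', _root_.mul_eq_one_comm.mp hTT'⟩
  · rw [bstar_TD, _root_.map_one, _root_.map_zero, TD_mul, Wm_eq_TD]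
    rw [show (1:F) * 1 + φ b * b = 0 by rw [hb]; ring]
    rw [show (1:F) * 1 + 0 * 0 = 1 by ring]
    rw [show φ gg * gg + φ l * l = 0 by
      rw [hφgg, hφl, hggdef, hldef]; ring]
    rw [show φ gg * b + φ l * 1 = 1 by
      rw [hφgg, hφl]; field_simp; rw [hsdef]; ring]
    rw [show (1:F) * 0 + 0 * 1 = 0 by ring]
    rw [show (1:F) * l + φ b * gg = 1 by
      rw [hφb, hggdef, hldef]; field_simp; rw [hsdef]; ring]
end Stmt8Aux

open Stmt8Aux

/-- Over `𝔽_{q²}` there is a `d × (d+1)` matrix `B` such that `BB*` and `B*B`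
are nilpotent with a single Jordan block. -/
theorem stmt8 (F : Type*) [Field F] [Fintype F] (q d : ℕ)
    (hq : Fintype.card F = q ^ 2) (hd : 0 < d) :
    ∃ B : Matrix (Fin d) (Fin (d + 1)) F,
      IsNilpotent (B * (B.map (· ^ q))ᵀ) ∧
      (B * (B.map (· ^ q))ᵀ).rank = d - 1 ∧
      (B * (B.map (· ^ q))ᵀ) ^ (d - 1) ≠ 0 ∧
      IsNilpotent ((B.map (· ^ q))ᵀ * B) ∧
      ((B.map (· ^ q))ᵀ * B).rank = d ∧
      ((B.map (· ^ q))ᵀ * B) ^ d ≠ 0 := by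
  classical
  have hq2 : 2 ≤ q := by
    have h1 : 1 < Fintype.card F := Fintype.one_lt_card
    rw [hq] at h1
    by_contra hle
    push_neg at hle
    interval_cases q <;> simp_all
  -- the characteristic
  set p := ringChar F with hpdef
  haveI hCharP : CharP F p := ringChar.charP F
  have hp : p.Prime := CharP.char_is_prime F p
  haveI := Fact.mk hp
  obtain ⟨k, hk1, hcard⟩ := FiniteField.card F p
  have hq2pk : q ^ 2 = p ^ (k : ℕ) := by rw [← hq, hcard]
  have hdvd : q ∣ p ^ (k : ℕ) := by
    rw [← hq2pk]
    exact dvd_pow_self q two_ne_zero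
  obtain ⟨a, hale, haq⟩ := (Nat.dvd_prime_pow hp).mp hdvd
  -- Frobenius x ↦ x^q as a ring hom
  have hphi_add : ∀ x y : F, (x + y) ^ q = x ^ q + y ^ q := by
    intro x y
    rw [haq]
    exact add_pow_char_pow x y p a
  set φ : F →+* F :=
    { toFun := fun x => x ^ q,
      map_one' := one_pow q,
      map_mul' := fun x y => mul_pow x y q,
      map_zero' := zero_pow (by omega : q ≠ 0),
      map_add' := hphi_add } with hφdef
  have hφx : ∀ x : F, φ x = x ^ q := fun x => rfl
  -- a generator of the unit group
  obtain ⟨g, hg⟩ := IsCyclic.exists_generator (α := Fˣ)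
  have hcardu : Fintype.card Fˣ = q ^ 2 - 1 := by rw [Fintype.card_units, hq]
  have hgord : orderOf g = q ^ 2 - 1 := by
    rw [orderOf_eq_card_of_forall_mem_zpowers hg, Nat.card_eq_fintype_card, hcardu]
  have hgpow_card : g ^ (q ^ 2 - 1) = 1 := by rw [← hgord]; exact pow_orderOf_eq_one g
  have hqq : q ^ 2 = q * q := sq q
  -- existence of a (q+1)-st root of -1
  have hBex : ∃ B : Fˣ, (B : F) ^ (q + 1) = -1 := by
    by_cases hm1 : (-1 : F) = 1
    · exact ⟨1, by rw [Units.val_one, one_pow, hm1]⟩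
    · have hqodd : q % 2 = 1 := by
        by_contra hev
        have h2 : (2 : ℕ) ∣ q := by omega
        have hp2 : p = 2 := by
          have h2pa : (2:ℕ) ∣ p ^ a := haq ▸ h2
          have h2p : (2:ℕ) ∣ p := Nat.Prime.dvd_of_dvd_pow Nat.prime_two h2pa
          exact ((Nat.prime_dvd_prime_iff_eq Nat.prime_two hp).mp h2p).symm
        haveI : CharP F 2 := hp2 ▸ hCharP
        exact hm1 (CharTwo.neg_eq (1 : F))
      obtain ⟨w, hw⟩ : ∃ w, q = 2 * w + 1 := ⟨q / 2, by omega⟩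
      have hwpos : 1 ≤ w := by omega
      have hprod1 : w * (q + 1) = 2 * (w * w) + 2 * w := by rw [hw]; ring
      have hprod2 : q * q = 4 * (w * w) + 4 * w + 1 := by rw [hw]; ring
      refine ⟨g ^ w, ?_⟩
      have hcval : ((g ^ w : Fˣ) : F) ^ (q + 1) = ((g ^ (w * (q + 1)) : Fˣ) : F) := by
        rw [← Units.val_pow_eq_pow_val, ← pow_mul]
      rw [hcval]
      have hcsq : ((g ^ (w * (q + 1)) : Fˣ) : F) * ((g ^ (w * (q + 1)) : Fˣ) : F) = 1 := by
        rw [← Units.val_mul, ← pow_add]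
        have hsum : w * (q + 1) + w * (q + 1) = q ^ 2 - 1 := by omega
        rw [hsum, hgpow_card, Units.val_one]
      have hcne : ((g ^ (w * (q + 1)) : Fˣ) : F) ≠ 1 := by
        intro hh
        have hunit : (g ^ (w * (q+1)) : Fˣ) = 1 := Units.ext hh
        have hdvd' := orderOf_dvd_of_pow_eq_one hunit
        rw [hgord] at hdvd'
        have hle' := Nat.le_of_dvd (by omega) hdvd'
        omega
      rcases mul_self_eq_one_iff.mp hcsq with h | h
      · exact absurd h hcne
      · exact h
  obtain ⟨Bu, hBu⟩ := hBex
  have homega_arith : (q - 1) * (q + 1) + 1 = q ^ 2 := by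
    obtain ⟨r, hr⟩ := Nat.exists_eq_add_of_le hq2
    have hsub : q - 1 = r + 1 := by omega
    rw [hsub, hr]; ring
  have hω : ((g ^ (q - 1) : Fˣ) : F) ^ (q + 1) = 1 := by
    rw [← Units.val_pow_eq_pow_val, ← pow_mul]
    rw [show (q - 1) * (q + 1) = q ^ 2 - 1 by omega]
    rw [hgpow_card, Units.val_one]
  have hb'pow : ((Bu * g ^ (q - 1) : Fˣ) : F) ^ (q + 1) = -1 := by
    rw [Units.val_mul, mul_pow, hBu, hω, mul_one]
  have hbne : (Bu : F) ≠ ((Bu * g ^ (q - 1) : Fˣ) : F) := by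
    intro hh
    have h1 : (Bu : F) * ((g ^ (q-1) : Fˣ) : F) = (Bu : F) * 1 := by
      rw [mul_one, ← Units.val_mul, ← hh]
    have h2 : ((g ^ (q-1) : Fˣ) : F) = 1 := mul_left_cancel₀ (Units.ne_zero Bu) h1
    have h3 : (g ^ (q-1) : Fˣ) = 1 := Units.ext (by rw [h2, Units.val_one])
    have hdvd' := orderOf_dvd_of_pow_eq_one h3
    rw [hgord] at hdvd'
    have h2q : 2 * q ≤ q * q := Nat.mul_le_mul_right q hq2
    have hle' := Nat.le_of_dvd (by omega) hdvd'
    omega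
  have hbphi : φ (Bu : F) * (Bu : F) = -1 := by
    rw [hφx, ← pow_succ]
    exact hBu
  have hb'phi : φ ((Bu * g ^ (q - 1) : Fˣ) : F) * ((Bu * g ^ (q - 1) : Fˣ) : F) = -1 := by
    rw [hφx, ← pow_succ]
    exact hb'pow
  -- construct the matrices
  obtain ⟨Td, Td', hTdW, hTd1, hTd2⟩ := exists_T φ _ _ hbphi hb'phi hbne d
  obtain ⟨Tn, Tn', hTnW, hTn1, hTn2⟩ := exists_T φ _ _ hbphi hb'phi hbne (d+1)
  have hXW : bstar φ Tn' * Wm (d+1) = Tn := by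
    calc bstar φ Tn' * Wm (d+1) = bstar φ Tn' * (bstar φ Tn * Tn) := by rw [hTnW]
      _ = (bstar φ Tn' * bstar φ Tn) * Tn := by rw [Matrix.mul_assoc]
      _ = bstar φ (Tn * Tn') * Tn := by rw [bstar_mul]
      _ = Tn := by rw [hTn1, bstar_one, Matrix.one_mul]
  set Bm : Matrix (Fin d) (Fin (d+1)) F := Td * (Em d : Matrix (Fin d) (Fin (d+1)) F) * Tn' with hBm
  have hBsB : bstar φ Bm * Bm = Tn * (Jm (d+1) * Tn') := by
    rw [hBm, bstar_mul, bstar_mul]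
    simp only [Matrix.mul_assoc]
    rw [← Matrix.mul_assoc (bstar φ Td) Td, hTdW]
    rw [← Matrix.mul_assoc (bstar φ (Em d : Matrix (Fin d) (Fin (d+1)) F)) (Wm d : Matrix (Fin d) (Fin d) F),
      ← Matrix.mul_assoc (bstar φ (Em d : Matrix (Fin d) (Fin (d+1)) F) * (Wm d : Matrix (Fin d) (Fin d) F)) (Em d : Matrix (Fin d) (Fin (d+1)) F), Em_key φ]
    simp only [Matrix.mul_assoc]
    rw [← Matrix.mul_assoc (bstar φ Tn') (Wm (d+1)), hXW]
  have hpow : ∀ kk : ℕ, (bstar φ Bm * Bm) ^ kk = Tn * ((Jm (d+1)) ^ kk * Tn') := by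
    intro kk
    induction kk with
    | zero => rw [pow_zero, pow_zero, Matrix.one_mul, hTn1]
    | succ kk ih =>
      rw [pow_succ, ih, hBsB]
      calc (Tn * ((Jm (d+1))^kk * Tn')) * (Tn * (Jm (d+1) * Tn'))
          = Tn * ((Jm (d+1))^kk * (Tn' * (Tn * (Jm (d+1) * Tn')))) := by
            simp only [Matrix.mul_assoc]
        _ = Tn * ((Jm (d+1))^kk * ((Tn' * Tn) * (Jm (d+1) * Tn'))) := by
            rw [← Matrix.mul_assoc Tn' Tn]
        _ = Tn * ((Jm (d+1))^kk * (Jm (d+1) * Tn')) := by rw [hTn2, Matrix.one_mul]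
        _ = Tn * (((Jm (d+1))^kk * Jm (d+1)) * Tn') := by
            rw [← Matrix.mul_assoc ((Jm (d+1))^kk)]
        _ = Tn * ((Jm (d+1))^(kk+1) * Tn') := by rw [← pow_succ]
  have hA2nil : (bstar φ Bm * Bm) ^ (d+1) = 0 := by
    rw [hpow, Jm_pow_self, Matrix.zero_mul, Matrix.mul_zero]
  have hA2d : (bstar φ Bm * Bm) ^ d ≠ 0 := by
    intro h0
    have hJd : (Jm (d+1) : Matrix (Fin (d+1)) (Fin (d+1)) F) ^ d = 0 := by
      have e2 : Tn' * ((bstar φ Bm * Bm) ^ d * Tn) = (Jm (d+1))^d := by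
        rw [hpow]
        calc Tn' * ((Tn * ((Jm (d+1))^d * Tn')) * Tn)
            = (Tn' * Tn) * ((Jm (d+1))^d * (Tn' * Tn)) := by simp only [Matrix.mul_assoc]
          _ = (Jm (d+1))^d := by rw [hTn2, Matrix.one_mul, Matrix.mul_one]
      rw [← e2, h0, Matrix.zero_mul, Matrix.mul_zero]
    have hJd' := Jm_pow_pred (F := F) (d+1) (by omega)
    rw [show d + 1 - 1 = d from rfl] at hJd'
    exact hJd' hJd
  have hApow : ∀ kk : ℕ, (Bm * bstar φ Bm) ^ (kk+1)
      = Bm * ((bstar φ Bm * Bm) ^ kk * bstar φ Bm) := by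
    intro kk
    induction kk with
    | zero => rw [pow_one, pow_zero, Matrix.one_mul]
    | succ kk ih =>
      rw [pow_succ, ih]
      calc (Bm * ((bstar φ Bm * Bm)^kk * bstar φ Bm)) * (Bm * bstar φ Bm)
          = Bm * ((bstar φ Bm * Bm)^kk * (bstar φ Bm * (Bm * bstar φ Bm))) := by
            simp only [Matrix.mul_assoc]
        _ = Bm * ((bstar φ Bm * Bm)^kk * ((bstar φ Bm * Bm) * bstar φ Bm)) := by
            rw [← Matrix.mul_assoc (bstar φ Bm) Bm]
        _ = Bm * (((bstar φ Bm * Bm)^kk * (bstar φ Bm * Bm)) * bstar φ Bm) := by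
            rw [← Matrix.mul_assoc ((bstar φ Bm * Bm)^kk)]
        _ = Bm * ((bstar φ Bm * Bm)^(kk+1) * bstar φ Bm) := by rw [← pow_succ]
  have hA2powrev : ∀ kk : ℕ, (bstar φ Bm * Bm) ^ (kk+1)
      = bstar φ Bm * ((Bm * bstar φ Bm) ^ kk * Bm) := by
    intro kk
    induction kk with
    | zero => rw [pow_one, pow_zero, Matrix.one_mul]
    | succ kk ih =>
      rw [pow_succ, ih]
      calc (bstar φ Bm * ((Bm * bstar φ Bm)^kk * Bm)) * (bstar φ Bm * Bm)
          = bstar φ Bm * ((Bm * bstar φ Bm)^kk * (Bm * (bstar φ Bm * Bm))) := by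
            simp only [Matrix.mul_assoc]
        _ = bstar φ Bm * ((Bm * bstar φ Bm)^kk * ((Bm * bstar φ Bm) * Bm)) := by
            rw [← Matrix.mul_assoc Bm (bstar φ Bm)]
        _ = bstar φ Bm * (((Bm * bstar φ Bm)^kk * (Bm * bstar φ Bm)) * Bm) := by
            rw [← Matrix.mul_assoc ((Bm * bstar φ Bm)^kk)]
        _ = bstar φ Bm * ((Bm * bstar φ Bm)^(kk+1) * Bm) := by rw [← pow_succ]
  have hAnil : IsNilpotent (Bm * bstar φ Bm) :=
    ⟨(d+1)+1, by rw [hApow, hA2nil, Matrix.zero_mul, Matrix.mul_zero]⟩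
  have hAd : (Bm * bstar φ Bm) ^ (d-1) ≠ 0 := by
    obtain ⟨e, he⟩ : ∃ e, d = e + 1 := ⟨d - 1, by omega⟩
    rw [show d - 1 = e by omega]
    intro h0
    apply hA2d
    have hde : (bstar φ Bm * Bm) ^ d = (bstar φ Bm * Bm) ^ (e + 1) :=
      congrArg (fun t => (bstar φ Bm * Bm) ^ t) he
    rw [hde, hA2powrev, h0, Matrix.zero_mul, Matrix.mul_zero]
  have hA2nilp : IsNilpotent (bstar φ Bm * Bm) := ⟨d+1, hA2nil⟩
  have hrankA : (Bm * bstar φ Bm).rank = d - 1 :=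
    rank_of_nilpotent_pow_pred hd _ hAnil hAd
  have hrankA2 : (bstar φ Bm * Bm).rank = d := by
    have hr := rank_of_nilpotent_pow_pred (m := d+1) (by omega) _ hA2nilp
      (by rw [show d + 1 - 1 = d from rfl]; exact hA2d)
    rwa [show d + 1 - 1 = d from rfl] at hr
  exact ⟨Bm, hAnil, hrankA, hAd, hA2nilp, hrankA2, hA2d⟩
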